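/- arXiv:1509.03597 — 6 statements merged into one kernel-verified Lean document; each statement's English description precedes it below -/
import Mathlib

section
/- In an N-player game where each cost decomposes as J^i(u, x^i) = Φ_i(u) + h(u, x^i) with the functions Φ_i admitting a common potential π (i.e., Φ_i(ũ^i, u^{-i}) − Φ_i(û^i, u^{-i}) = π(ũ^i, u^{-i}) − π(û^i, u^{-i}) for all i), and where each player i chooses (u^i, x^i) subject to x^i being determined as a function of the full action profile u through a shared recursion (so that feasible x^i are identical across players given u), any global minimizer (u, w) of π(u) + h(u, w) over the joint feasible set is a Nash equilibrium of the game, with each player's equilibrium state x^i equal to w. -/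
/-- Feasibility of a state trajectory `w` under action profile `u`:
the state-conjecture recursion starting from initial state `x1`. -/
def Feas3 {ι : Type*} {Act : ι → Type*} {X : Type*}
    (f : ℕ → X → (∀ i, Act i) → X) (x1 : X)
    (u : ∀ i, ℕ → Act i) (w : ℕ → X) : Prop :=
  w 0 = x1 ∧ ∀ k, w (k + 1) = f k (w k) (fun i => u i k)

/-- In a quasi-potential game with costs J^i(u, x^i) = Φ_i(u) + h(u, x^i)
and Φ_i admitting a common potential π, any global minimizer (u, w) of π(u) + h(u, w)
over the joint feasible set is a Nash equilibrium, each player's state being w. -/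
theorem stmt_3 {ι : Type*} [DecidableEq ι] {Act : ι → Type*} {X : Type*}
    (f : ℕ → X → (∀ i, Act i) → X) (x1 : X)
    (Φ : ι → (∀ i, ℕ → Act i) → ℝ)
    (h : (∀ i, ℕ → Act i) → (ℕ → X) → ℝ)
    (π : (∀ i, ℕ → Act i) → ℝ)
    (hpot : ∀ (i : ι) (u : ∀ j, ℕ → Act j) (v v' : ℕ → Act i),
      Φ i (Function.update u i v) - Φ i (Function.update u i v') =
        π (Function.update u i v) - π (Function.update u i v'))
    (u : ∀ i, ℕ → Act i) (w : ℕ → X)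
    (hfeas : Feas3 f x1 u w)
    (hmin : ∀ (u' : ∀ i, ℕ → Act i) (w' : ℕ → X),
      Feas3 f x1 u' w' → π u + h u w ≤ π u' + h u' w') :
    ∀ (i : ι) (v : ℕ → Act i) (w' : ℕ → X),
      Feas3 f x1 (Function.update u i v) w' →
        Φ i u + h u w ≤ Φ i (Function.update u i v) + h (Function.update u i v) w' := by
  intro i v w' hf
  have hself : Function.update u i (u i) = u := Function.update_eq_self i u
  have hp := hpot i u v (u i)
  rw [hself] at hp
  have hm := hmin (Function.update u i v) w' hf
  linarith
end

section
/- In the discrete-time dynamic game with consistent conjectures, the constraint map Ω'(u, x) = ∏_i Ω'_i(u^{-i}, x^{-i}; x_1) is a shared-constraint map: for every player i, (u^i, x^i) ∈ Ω'_i(u^{-i}, x^{-i}; x_1) if and only if (u, x) ∈ (U × A) ∩ H, where A = { x ∈ X : x^i = x^j for all i, j } and H = { (u, x) : for every i, x^i_2 = f_1(x_1, u_1) and x^i_{k+1} = f_k(x^i_k, u_k) for all k }. In particular, the set on the right is independent of i and equals the fixed-point set F'. -/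
/-- Feasibility of a conjectured state trajectory under a full action profile. -/
def Feas7 {ι : Type*} {Act : ι → Type*} {X : Type*}
    (f : ℕ → X → (∀ i, Act i) → X) (x1 : X)
    (u : ∀ i, ℕ → Act i) (w : ℕ → X) : Prop :=
  w 0 = x1 ∧ ∀ k, w (k + 1) = f k (w k) (fun i => u i k)

/-- The constraint map of the DTDG with consistent conjectures is a
shared-constraint map: for every player i, (u^i, x^i) ∈ Ω'_i(u^{-i}, x^{-i}; x_1)
iff (u, x) lies in the player-independent set (U × A) ∩ H, which is the
fixed-point set F'. -/
theorem stmt_7 {ι : Type*} {Act : ι → Type*} {X : Type*}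
    (f : ℕ → X → (∀ i, Act i) → X) (x1 : X)
    (u : ∀ i, ℕ → Act i) (x : ι → ℕ → X) :
    (∀ i : ι,
      ((Feas7 f x1 u (x i) ∧ ∀ j : ι, j ≠ i → x i = x j) ↔
        ((∀ p q : ι, x p = x q) ∧ ∀ p : ι, Feas7 f x1 u (x p)))) ∧
    (((∀ p q : ι, x p = x q) ∧ ∀ p : ι, Feas7 f x1 u (x p)) ↔
      (∀ i : ι, Feas7 f x1 u (x i) ∧ ∀ j : ι, j ≠ i → x i = x j)) := by
  have key : ∀ i : ι,
      ((Feas7 f x1 u (x i) ∧ ∀ j : ι, j ≠ i → x i = x j) ↔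
        ((∀ p q : ι, x p = x q) ∧ ∀ p : ι, Feas7 f x1 u (x p))) := by
    intro i
    constructor
    · rintro ⟨hf, hx⟩
      have hxi : ∀ p, x p = x i := by
        intro p
        by_cases h : p = i
        · rw [h]
        · exact (hx p h).symm
      refine ⟨fun p q => (hxi p).trans (hxi q).symm, fun p => (hxi p) ▸ hf⟩
    · rintro ⟨hx, hf⟩
      exact ⟨hf i, fun j _ => hx i j⟩
  refine ⟨key, ?_⟩
  constructor
  · intro h i
    exact (key i).mpr h
  · intro h
    rcases isEmpty_or_nonempty ι with hι | ⟨⟨i⟩⟩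
    · exact ⟨fun p => (hι.false p).elim, fun p => (hι.false p).elim⟩
    · exact (key i).mp (h i)
end

section
/- In a linear-quadratic discrete-time dynamic game where all players share the same state-weight matrices (Q_{k+1} := Q^i_{k+1} for all i), the stagewise cost functions g^i_k(x^i_{k+1}, u_k) = ½( x^i_{k+1}ᵀ Q_{k+1} x^i_{k+1} + Σ_j u^jᵀ_k R^{ij}_k u^j_k ) admit a quasi-potential decomposition: g^i_k = Ψ^i_k(u_k) + h_k(x^i_{k+1}) where Ψ^i_k(u_k) = ½ Σ_j u^jᵀ_k R^{ij}_k u^j_k admits the common potential π_k(u_k) = ½ Σ_i u^iᵀ_k R^{ii}_k u^i_k, i.e., Ψ^i_k(ũ^i_k, u^{-i}_k) − Ψ^i_k(û^i_k, u^{-i}_k) = π_k(ũ^i_k, u^{-i}_k) − π_k(û^i_k, u^{-i}_k) for all i, all ũ^i_k, û^i_k, and all u^{-i}_k, and h_k(x) = ½ xᵀ Q_{k+1} x is independent of the player index. -/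
open Matrix in
/-- In a linear-quadratic DTDG with a common state-weight matrix
Q_{k+1}, the stagewise cost g^i_k decomposes as Ψ^i_k(u_k) + h_k(x^i_{k+1}) with
Ψ^i_k admitting the common potential π_k and h_k player-independent. -/
theorem stmt_10 {N n : ℕ} (m : Fin N → ℕ) [DecidableEq (Fin N)]
    (Q : Matrix (Fin n) (Fin n) ℝ)
    (R : ∀ _ : Fin N, ∀ j : Fin N, Matrix (Fin (m j)) (Fin (m j)) ℝ) :
    -- quasi-potential decomposition g^i_k = Ψ^i_k + h_k
    (∀ (i : Fin N) (x : Fin n → ℝ) (u : ∀ j, Fin (m j) → ℝ),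
      (1 / 2 : ℝ) * (x ⬝ᵥ Q.mulVec x + ∑ j, u j ⬝ᵥ (R i j).mulVec (u j)) =
        ((1 / 2 : ℝ) * ∑ j, u j ⬝ᵥ (R i j).mulVec (u j)) +
        (1 / 2 : ℝ) * (x ⬝ᵥ Q.mulVec x)) ∧
    -- π_k is a potential for the family Ψ^i_k
    (∀ (i : Fin N) (u : ∀ j, Fin (m j) → ℝ) (v v' : Fin (m i) → ℝ),
      ((1 / 2 : ℝ) * ∑ j, Function.update u i v j ⬝ᵥ
          (R i j).mulVec (Function.update u i v j)) -
      ((1 / 2 : ℝ) * ∑ j, Function.update u i v' j ⬝ᵥ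
          (R i j).mulVec (Function.update u i v' j)) =
      ((1 / 2 : ℝ) * ∑ j, Function.update u i v j ⬝ᵥ
          (R j j).mulVec (Function.update u i v j)) -
      ((1 / 2 : ℝ) * ∑ j, Function.update u i v' j ⬝ᵥ
          (R j j).mulVec (Function.update u i v' j))) := by
  constructor
  · intro i x u; ring
  · intro i u v v'
    have h : ∀ (G : ∀ j : Fin N, (Fin (m j) → ℝ) → ℝ) (w : Fin (m i) → ℝ),
        ∑ j, G j (Function.update u i w j)
          = G i w + ∑ j ∈ Finset.univ.erase i, G j (u j) := by
      intro G w
      rw [← Finset.add_sum_erase _ _ (Finset.mem_univ i), Function.update_self]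
      congr 1
      exact Finset.sum_congr rfl fun j hj => by
        rw [Function.update_of_ne (Finset.ne_of_mem_erase hj)]
    rw [h (fun j z => z ⬝ᵥ (R i j).mulVec z), h (fun j z => z ⬝ᵥ (R i j).mulVec z),
        h (fun j z => z ⬝ᵥ (R j j).mulVec z), h (fun j z => z ⬝ᵥ (R j j).mulVec z)]
    ring
end

section
/- If (u*, w*) is a Nash equilibrium of an N-player game in which each player i's penalized cost is J^i(v) + μ_i · p_i(v) with p_i ≥ 0 and p_i(u*, w*) = 0 over feasible sets Ω_i, and for each i the quantity μ_i · p_i evaluated at any best response of player i in the unpenalized game is at most ε_i, then (u*, w*) is an ε-Nash equilibrium of the unpenalized game with ε = max_i ε_i, provided best responses exist. -/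
/-- If (u*, w*) is a Nash equilibrium of the penalized game
(costs J^i + μ_i·p_i, with p_i ≥ 0 vanishing at the equilibrium), and for each
player the penalty term evaluated at a best response of the unpenalized game is
at most ε_i, then (u*, w*) is an ε-Nash equilibrium of the unpenalized game
with ε = max_i ε_i. -/
theorem stmt_13 {N : ℕ} {D : Fin (N + 1) → Type*} [DecidableEq (Fin (N + 1))]
    (Ω : ∀ i, Set (D i))
    (J : Fin (N + 1) → (∀ i, D i) → ℝ)
    (p : Fin (N + 1) → (∀ i, D i) → ℝ)
    (μ ε : Fin (N + 1) → ℝ)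
    (dstar : ∀ i, D i) (hfeas : ∀ i, dstar i ∈ Ω i)
    (hp_nonneg : ∀ i d, 0 ≤ p i d)
    (hp_star : ∀ i, p i dstar = 0)
    (hpenNE : ∀ (i : Fin (N + 1)) (v : D i), v ∈ Ω i →
      J i dstar + μ i * p i dstar ≤
        J i (Function.update dstar i v) + μ i * p i (Function.update dstar i v))
    (hbr : ∀ i : Fin (N + 1), ∃ b ∈ Ω i,
      (∀ v ∈ Ω i, J i (Function.update dstar i b) ≤ J i (Function.update dstar i v)) ∧
      μ i * p i (Function.update dstar i b) ≤ ε i) :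
    ∀ (i : Fin (N + 1)) (v : D i), v ∈ Ω i →
      J i dstar ≤ J i (Function.update dstar i v) +
        Finset.univ.sup' (Finset.univ_nonempty) ε := by
  intro i v hv
  obtain ⟨b, hb, hbest, hpen⟩ := hbr i
  have h1 := hpenNE i b hb
  rw [hp_star i] at h1
  have h2 : J i dstar ≤ J i (Function.update dstar i b) + ε i := by
    nlinarith [hpen]
  have h3 := hbest v hv
  have h4 : ε i ≤ Finset.univ.sup' Finset.univ_nonempty ε :=
    Finset.le_sup' ε (Finset.mem_univ i)
  linarith
end

section
/- In a game where each player i's decision variables include equality constraints x^i = x^{j} for all j ≠ i (consistency with all rivals), a profile is a Nash equilibrium of this game if and only if it is a Nash equilibrium of the modified game where each player i's consistency constraint is replaced by the single constraint x^i = x^{j(i)}, where j(i) = i+1 for i < N and j(N) = 1 (consistency with the next labelled player only), provided in both cases equilibrium candidates satisfy full consistency. -/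
/-- A fully consistent profile is a Nash equilibrium of the game
G_c (each player's conjecture constrained to agree with all rivals) iff it is a
Nash equilibrium of the game G_a (each player's conjecture constrained to agree
only with the next labelled player j(i) = i+1 mod N). -/
theorem stmt_15 {N : ℕ} [NeZero N] (hN : 2 ≤ N)
    {Act : Fin N → Type*} {X : Type*}
    (Feas : (∀ i, Act i) → (ℕ → X) → Prop)
    (J : Fin N → (∀ i, Act i) → (ℕ → X) → ℝ)
    (u : ∀ i, Act i) (x : Fin N → ℕ → X)
    (hcons : ∀ i j : Fin N, x i = x j) :
    ((∀ (i : Fin N) (v : Act i) (w : ℕ → X),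
        (Feas (Function.update u i v) w ∧ ∀ j : Fin N, j ≠ i → w = x j) →
          J i u (x i) ≤ J i (Function.update u i v) w) ↔
      (∀ (i : Fin N) (v : Act i) (w : ℕ → X),
        (Feas (Function.update u i v) w ∧ w = x (i + 1)) →
          J i u (x i) ≤ J i (Function.update u i v) w)) := by
  have hne : ∀ i : Fin N, i + 1 ≠ i := by
    intro i h
    have h1 : (1 : Fin N) = 0 := by
      have := congrArg (· - i) h
      simpa using this
    have h2 : ((1 : Fin N)).val = 0 := by rw [h1]; rfl
    rw [Fin.val_one', Nat.mod_eq_of_lt (by omega)] at h2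
    exact one_ne_zero h2
  constructor
  · intro H i v w ⟨hf, hw⟩
    exact H i v w ⟨hf, fun j hj => hw.trans (hcons (i+1) j)⟩
  · intro H i v w ⟨hf, hw⟩
    exact H i v w ⟨hf, hw (i+1) (hne i)⟩
end

section
/- In a two-player, two-stage discrete-time dynamic game with scalar states and actions, dynamics x_{k+1} = a_k x_k + b^1_k u^1_k + b^2_k u^2_k, and costs J^i = Σ_{k=1}^{2} ½( q_{k+1} x_{k+1}^2 + r^{i1}_k (u^1_k)^2 + r^{i2}_k (u^2_k)^2 ) with q_{k+1} > 0 and r^{ii}_k > 0 for both players i, the function (u, w) ↦ Σ_k ½( q_{k+1} w_{k+1}^2 + r^{11}_k (u^1_k)^2 + r^{22}_k (u^2_k)^2 ) restricted to the set F^q of (u, w) satisfying the state recursion is continuous and coercive, and hence attains a global minimum; this minimum yields an open-loop Nash equilibrium of the game. -/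
private lemma max_sq_le {a b : ℝ} :
    (max a b) ^ 2 ≤ a ^ 2 + b ^ 2 := by
  rcases max_cases a b with ⟨h, _⟩ | ⟨h, _⟩ <;> rw [h] <;> nlinarith


private lemma coer_aux4 {c q2 q3 r1 r2 r3 r4 n x y z t w1 w2 : ℝ}
    (hc : 0 ≤ c) (hc1 : c ≤ r1) (hc2 : c ≤ r2) (hc3 : c ≤ r3) (hc4 : c ≤ r4)
    (hq2 : 0 ≤ q2) (hq3 : 0 ≤ q3) (hn : n ≤ x ^ 2 + y ^ 2 + z ^ 2 + t ^ 2) :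
    c / 2 * n ≤ 1 / 2 * (q2 * w1 ^ 2 + r1 * x ^ 2 + r3 * z ^ 2) +
      1 / 2 * (q3 * w2 ^ 2 + r2 * y ^ 2 + r4 * t ^ 2) := by
  nlinarith [mul_le_mul_of_nonneg_right hc1 (sq_nonneg x),
    mul_le_mul_of_nonneg_right hc2 (sq_nonneg y),
    mul_le_mul_of_nonneg_right hc3 (sq_nonneg z),
    mul_le_mul_of_nonneg_right hc4 (sq_nonneg t),
    mul_nonneg hq2 (sq_nonneg w1), mul_nonneg hq3 (sq_nonneg w2),
    mul_le_mul_of_nonneg_left hn hc]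

private lemma coer_aux6 {c q2 q3 r1 r2 r3 r4 n x y z t w1 w2 : ℝ}
    (hc : 0 ≤ c) (hc1 : c ≤ r1) (hc2 : c ≤ r2) (hc3 : c ≤ r3) (hc4 : c ≤ r4)
    (hcq2 : c ≤ q2) (hcq3 : c ≤ q3)
    (hn : n ≤ x ^ 2 + y ^ 2 + z ^ 2 + t ^ 2 + w1 ^ 2 + w2 ^ 2) :
    c / 2 * n ≤ 1 / 2 * (q2 * w1 ^ 2 + r1 * x ^ 2 + r3 * z ^ 2) +
      1 / 2 * (q3 * w2 ^ 2 + r2 * y ^ 2 + r4 * t ^ 2) := by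
  nlinarith [mul_le_mul_of_nonneg_right hc1 (sq_nonneg x),
    mul_le_mul_of_nonneg_right hc2 (sq_nonneg y),
    mul_le_mul_of_nonneg_right hc3 (sq_nonneg z),
    mul_le_mul_of_nonneg_right hc4 (sq_nonneg t),
    mul_le_mul_of_nonneg_right hcq2 (sq_nonneg w1),
    mul_le_mul_of_nonneg_right hcq3 (sq_nonneg w2),
    mul_le_mul_of_nonneg_left hn hc]


set_option maxHeartbeats 1000000 in
/-- Two-player, two-stage scalar linear-quadratic DTDG: the
quasi-potential function restricted to the feasible set F^q is continuous and
coercive, hence attains a global minimum, and this minimum is an open-loop Nash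
equilibrium of the game. Decision points are p = (u¹, u², w) with
u¹ = (u¹₁, u¹₂), u² = (u²₁, u²₂), w = (w₂, w₃). -/
theorem stmt_17 (x1 a1 a2 b11 b21 b12 b22 r121 r122 r211 r212 : ℝ)
    (q2 q3 r111 r112 r221 r222 : ℝ)
    (hq2 : 0 < q2) (hq3 : 0 < q3) (h111 : 0 < r111) (h112 : 0 < r112)
    (h221 : 0 < r221) (h222 : 0 < r222) :
    let Fq : Set ((ℝ × ℝ) × (ℝ × ℝ) × (ℝ × ℝ)) :=
      {p | p.2.2.1 = a1 * x1 + b11 * p.1.1 + b21 * p.2.1.1 ∧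
           p.2.2.2 = a2 * p.2.2.1 + b12 * p.1.2 + b22 * p.2.1.2}
    let φ : (ℝ × ℝ) × (ℝ × ℝ) × (ℝ × ℝ) → ℝ := fun p =>
      1 / 2 * (q2 * p.2.2.1 ^ 2 + r111 * p.1.1 ^ 2 + r221 * p.2.1.1 ^ 2) +
      1 / 2 * (q3 * p.2.2.2 ^ 2 + r112 * p.1.2 ^ 2 + r222 * p.2.1.2 ^ 2)
    let J1 : (ℝ × ℝ) × (ℝ × ℝ) × (ℝ × ℝ) → ℝ := fun p =>
      1 / 2 * (q2 * p.2.2.1 ^ 2 + r111 * p.1.1 ^ 2 + r121 * p.2.1.1 ^ 2) +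
      1 / 2 * (q3 * p.2.2.2 ^ 2 + r112 * p.1.2 ^ 2 + r122 * p.2.1.2 ^ 2)
    let J2 : (ℝ × ℝ) × (ℝ × ℝ) × (ℝ × ℝ) → ℝ := fun p =>
      1 / 2 * (q2 * p.2.2.1 ^ 2 + r211 * p.1.1 ^ 2 + r221 * p.2.1.1 ^ 2) +
      1 / 2 * (q3 * p.2.2.2 ^ 2 + r212 * p.1.2 ^ 2 + r222 * p.2.1.2 ^ 2)
    ContinuousOn φ Fq ∧
    (∀ M : ℝ, ∃ R : ℝ, ∀ p ∈ Fq, R ≤ ‖p‖ → M ≤ φ p) ∧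
    ∃ p ∈ Fq, (∀ p' ∈ Fq, φ p ≤ φ p') ∧
      (∀ v1 w' : ℝ × ℝ,
        (w'.1 = a1 * x1 + b11 * v1.1 + b21 * p.2.1.1 ∧
         w'.2 = a2 * w'.1 + b12 * v1.2 + b22 * p.2.1.2) →
          J1 p ≤ J1 (v1, p.2.1, w')) ∧
      (∀ v2 w' : ℝ × ℝ,
        (w'.1 = a1 * x1 + b11 * p.1.1 + b21 * v2.1 ∧
         w'.2 = a2 * w'.1 + b12 * p.1.2 + b22 * v2.2) →
          J2 p ≤ J2 (p.1, v2, w')) := by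
  intro Fq φ J1 J2
  have hφcont : Continuous φ := by unfold φ; fun_prop
  set c : ℝ := min (min q2 q3) (min (min r111 r112) (min r221 r222)) with hc
  have hcpos : 0 < c := by
    simp only [hc, lt_min_iff]; exact ⟨⟨hq2, hq3⟩, ⟨h111, h112⟩, h221, h222⟩
  have hcq2 : c ≤ q2 := le_trans (min_le_left _ _) (min_le_left _ _)
  have hcq3 : c ≤ q3 := le_trans (min_le_left _ _) (min_le_right _ _)
  have hc111 : c ≤ r111 := le_trans (min_le_right _ _) (le_trans (min_le_left _ _) (min_le_left _ _))
  have hc112 : c ≤ r112 := le_trans (min_le_right _ _) (le_trans (min_le_left _ _) (min_le_right _ _))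
  have hc221 : c ≤ r221 := le_trans (min_le_right _ _) (le_trans (min_le_right _ _) (min_le_left _ _))
  have hc222 : c ≤ r222 := le_trans (min_le_right _ _) (le_trans (min_le_right _ _) (min_le_right _ _))
  clear_value c
  -- norm bound on the big space
  have hnorm : ∀ p : (ℝ × ℝ) × (ℝ × ℝ) × (ℝ × ℝ),
      ‖p‖ ^ 2 ≤ p.1.1 ^ 2 + p.1.2 ^ 2 + p.2.1.1 ^ 2 + p.2.1.2 ^ 2 + p.2.2.1 ^ 2 + p.2.2.2 ^ 2 := by
    intro p
    have e : ‖p‖ = max (max |p.1.1| |p.1.2|)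
        (max (max |p.2.1.1| |p.2.1.2|) (max |p.2.2.1| |p.2.2.2|)) := by
      simp [Prod.norm_def, Real.norm_eq_abs]
    rw [e]
    have h1 : (max |p.1.1| |p.1.2|) ^ 2 ≤ |p.1.1| ^ 2 + |p.1.2| ^ 2 := max_sq_le
    have h2 : (max |p.2.1.1| |p.2.1.2|) ^ 2 ≤ |p.2.1.1| ^ 2 + |p.2.1.2| ^ 2 := max_sq_le
    have h3 : (max |p.2.2.1| |p.2.2.2|) ^ 2 ≤ |p.2.2.1| ^ 2 + |p.2.2.2| ^ 2 := max_sq_le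
    have h4 : (max (max |p.2.1.1| |p.2.1.2|) (max |p.2.2.1| |p.2.2.2|)) ^ 2 ≤
        (max |p.2.1.1| |p.2.1.2|) ^ 2 + (max |p.2.2.1| |p.2.2.2|) ^ 2 := max_sq_le
    have h5 : (max (max |p.1.1| |p.1.2|)
        (max (max |p.2.1.1| |p.2.1.2|) (max |p.2.2.1| |p.2.2.2|))) ^ 2 ≤
        (max |p.1.1| |p.1.2|) ^ 2 +
        (max (max |p.2.1.1| |p.2.1.2|) (max |p.2.2.1| |p.2.2.2|)) ^ 2 := max_sq_le
    simp only [sq_abs] at h1 h2 h3 h4 h5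
    linarith
  have hφlb : ∀ p : (ℝ × ℝ) × (ℝ × ℝ) × (ℝ × ℝ), c / 2 * ‖p‖ ^ 2 ≤ φ p := by
    intro p
    have h := hnorm p
    have s1 : (0:ℝ) ≤ p.1.1 ^ 2 := sq_nonneg _
    have s2 : (0:ℝ) ≤ p.1.2 ^ 2 := sq_nonneg _
    have s3 : (0:ℝ) ≤ p.2.1.1 ^ 2 := sq_nonneg _
    have s4 : (0:ℝ) ≤ p.2.1.2 ^ 2 := sq_nonneg _
    have s5 : (0:ℝ) ≤ p.2.2.1 ^ 2 := sq_nonneg _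
    have s6 : (0:ℝ) ≤ p.2.2.2 ^ 2 := sq_nonneg _
    simp only [φ]
    exact coer_aux6 hcpos.le hc111 hc112 hc221 hc222 hcq2 hcq3 h
  refine ⟨hφcont.continuousOn, ?_, ?_⟩
  · intro M
    refine ⟨Real.sqrt (2 * max M 0 / c), fun p _ hR => ?_⟩
    have hnn : 0 ≤ 2 * max M 0 / c := by positivity
    have h0 : (0:ℝ) ≤ Real.sqrt (2 * max M 0 / c) := Real.sqrt_nonneg _
    have hsq : Real.sqrt (2 * max M 0 / c) ^ 2 = 2 * max M 0 / c := Real.sq_sqrt hnn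
    have h1 : 2 * max M 0 / c ≤ ‖p‖ ^ 2 := by
      rw [← hsq]; exact pow_le_pow_left₀ h0 hR 2
    have h2 := hφlb p
    have h3 : max M 0 ≤ c / 2 * ‖p‖ ^ 2 := by
      rw [div_mul_eq_mul_div, le_div_iff₀ (by norm_num : (0:ℝ) < 2)]
      calc max M 0 * 2 = c * (2 * max M 0 / c) := by field_simp
        _ ≤ c * ‖p‖ ^ 2 := by exact mul_le_mul_of_nonneg_left h1 hcpos.le
    exact le_trans (le_trans (le_max_left M 0) h3) h2
  · -- parametrized objective on controls
    set W1 : (ℝ × ℝ) × (ℝ × ℝ) → ℝ := fun u => a1 * x1 + b11 * u.1.1 + b21 * u.2.1 with hW1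
    set W2 : (ℝ × ℝ) × (ℝ × ℝ) → ℝ := fun u => a2 * W1 u + b12 * u.1.2 + b22 * u.2.2 with hW2
    set f : (ℝ × ℝ) × (ℝ × ℝ) → ℝ := fun u => φ (u.1, u.2, (W1 u, W2 u)) with hf
    have hfcont : Continuous f := by
      unfold f φ W2 W1; fun_prop
    have hfcoer : Filter.Tendsto f (Filter.cocompact _) Filter.atTop := by
      have hub : ∀ u : (ℝ × ℝ) × (ℝ × ℝ), c / 2 * ‖u‖ ^ 2 ≤ f u := by
        intro u
        have e : ‖u‖ = max (max |u.1.1| |u.1.2|) (max |u.2.1| |u.2.2|) := by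
          simp [Prod.norm_def, Real.norm_eq_abs]
        have h1 : (max |u.1.1| |u.1.2|) ^ 2 ≤ |u.1.1| ^ 2 + |u.1.2| ^ 2 := max_sq_le
        have h2 : (max |u.2.1| |u.2.2|) ^ 2 ≤ |u.2.1| ^ 2 + |u.2.2| ^ 2 := max_sq_le
        have h3 : (max (max |u.1.1| |u.1.2|) (max |u.2.1| |u.2.2|)) ^ 2 ≤
            (max |u.1.1| |u.1.2|) ^ 2 + (max |u.2.1| |u.2.2|) ^ 2 := max_sq_le
        simp only [sq_abs] at h1 h2 h3
        have hn : ‖u‖ ^ 2 ≤ u.1.1 ^ 2 + u.1.2 ^ 2 + u.2.1 ^ 2 + u.2.2 ^ 2 := by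
          rw [e]; linarith
        have hfu : f u = 1 / 2 * (q2 * (W1 u) ^ 2 + r111 * u.1.1 ^ 2 + r221 * u.2.1 ^ 2) +
            1 / 2 * (q3 * (W2 u) ^ 2 + r112 * u.1.2 ^ 2 + r222 * u.2.2 ^ 2) := rfl
        rw [hfu]
        exact coer_aux4 hcpos.le hc111 hc112 hc221 hc222 hq2.le hq3.le hn
      have h1 : Filter.Tendsto (fun u : (ℝ × ℝ) × (ℝ × ℝ) => c / 2 * ‖u‖ ^ 2)
          (Filter.cocompact _) Filter.atTop := by
        have h2 : Filter.Tendsto (fun x : ℝ => c / 2 * x ^ 2) Filter.atTop Filter.atTop :=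
          (Filter.tendsto_pow_atTop (by norm_num : (2:ℕ) ≠ 0)).const_mul_atTop (by positivity)
        exact h2.comp tendsto_norm_cocompact_atTop
      exact Filter.tendsto_atTop_mono hub h1
    obtain ⟨u0, hu0⟩ := hfcont.exists_forall_le hfcoer
    refine ⟨(u0.1, u0.2, (W1 u0, W2 u0)), ⟨rfl, rfl⟩, ?_, ?_, ?_⟩
    · intro p' hp'
      have : p' = (p'.1, p'.2.1, (W1 (p'.1, p'.2.1), W2 (p'.1, p'.2.1))) := by
        obtain ⟨e1, e2⟩ := hp'
        simp only [hW1, hW2]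
        ext <;> simp [← e1, ← e2]
      rw [this]
      exact hu0 (p'.1, p'.2.1)
    · rintro v1 w' ⟨e1, e2⟩
      have hmem : ((v1, u0.2, w') : (ℝ × ℝ) × (ℝ × ℝ) × (ℝ × ℝ)) ∈ Fq := ⟨e1, e2⟩
      have : ((v1, u0.2, w') : (ℝ × ℝ) × (ℝ × ℝ) × (ℝ × ℝ)) =
          ((v1, u0.2).1, (v1, u0.2).2, (W1 (v1, u0.2), W2 (v1, u0.2))) := by
        simp only [hW1, hW2]; ext <;> simp [← e1, ← e2]
      have hle : f u0 ≤ φ (v1, u0.2, w') := by rw [this]; exact hu0 (v1, u0.2)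
      simp only [hf, φ, J1] at hle ⊢
      linarith
    · rintro v2 w' ⟨e1, e2⟩
      have : ((u0.1, v2, w') : (ℝ × ℝ) × (ℝ × ℝ) × (ℝ × ℝ)) =
          ((u0.1, v2).1, (u0.1, v2).2, (W1 (u0.1, v2), W2 (u0.1, v2))) := by
        simp only [hW1, hW2]; ext <;> simp [← e1, ← e2]
      have hle : f u0 ≤ φ (u0.1, v2, w') := by rw [this]; exact hu0 (u0.1, v2)
      simp only [hf, φ, J2] at hle ⊢
      linarith
end
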